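/- Let n, m be positive integers and let lb, ub : Fin m → ℤ. Let P be the set of all f : Fin n → Fin m → ℝ such that f i j ≥ 0 for all i, j; Σ_j f i j = 1 for every i; and (lb j : ℝ) ≤ Σ_i f i j ≤ (ub j : ℝ) for every j. Then every extreme point of P is a 0–1 matrix, i.e., for every extreme point f of P and all i, j, f i j = 0 or f i j = 1. -/

import Mathlib

open Set

section Aux

open Module

private lemma aux_ker_ne_zero {α β : Type*} [Fintype α] [Fintype β]
    (A : (α → ℝ) →ₗ[ℝ] (β → ℝ)) (h : Module.finrank ℝ (LinearMap.range A) < Fintype.card α) :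
    ∃ g, A g = 0 ∧ g ≠ 0 := by
  have hrn := LinearMap.finrank_range_add_finrank_ker A
  rw [Module.finrank_pi ℝ] at hrn
  have hker : 0 < Module.finrank ℝ (LinearMap.ker A) := by omega
  obtain ⟨⟨g, hg⟩, hgne⟩ := Module.finrank_pos_iff_exists_ne_zero.mp hker
  exact ⟨g, hg, fun h0 => hgne (by simpa [Subtype.ext_iff] using h0)⟩

private lemma aux_ker1 {α β : Type*} [Fintype α] [Fintype β]
    (A : (α → ℝ) →ₗ[ℝ] (β → ℝ)) (h : Fintype.card β < Fintype.card α) :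
    ∃ g, A g = 0 ∧ g ≠ 0 := by
  apply aux_ker_ne_zero
  calc Module.finrank ℝ (LinearMap.range A) ≤ Module.finrank ℝ (β → ℝ) :=
        Submodule.finrank_le _
    _ = Fintype.card β := Module.finrank_pi ℝ
    _ < _ := h

private lemma aux_ker2 {α β : Type*} [Fintype α] [Fintype β]
    (A : (α → ℝ) →ₗ[ℝ] (β → ℝ)) (φ : (β → ℝ) →ₗ[ℝ] ℝ)
    (hφ : Function.Surjective φ) (hdep : ∀ g, φ (A g) = 0)
    (h : Fintype.card β ≤ Fintype.card α) :
    ∃ g, A g = 0 ∧ g ≠ 0 := by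
  apply aux_ker_ne_zero
  have hle : LinearMap.range A ≤ LinearMap.ker φ := by
    rintro x ⟨g, rfl⟩; exact hdep g
  have h1 : Module.finrank ℝ (LinearMap.range A) ≤ Module.finrank ℝ (LinearMap.ker φ) :=
    Submodule.finrank_mono hle
  have hrn := LinearMap.finrank_range_add_finrank_ker φ
  rw [Module.finrank_pi ℝ] at hrn
  have hrr : Module.finrank ℝ (LinearMap.range φ) = 1 := by
    rw [LinearMap.range_eq_top.mpr hφ]
    simp [finrank_top ℝ ℝ]
  have hcb : Fintype.card β = Module.finrank ℝ (β → ℝ) := (Module.finrank_pi ℝ).symm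
  omega

/-- Extension by zero from a finset to the whole type, as a linear map. -/
private def myExt {γ : Type*} [DecidableEq γ] (F : Finset γ) : (↥F → ℝ) →ₗ[ℝ] (γ → ℝ) where
  toFun g := fun x => if h : x ∈ F then g ⟨x, h⟩ else 0
  map_add' g h := by funext x; by_cases hx : x ∈ F <;> simp [hx]
  map_smul' c g := by funext x; by_cases hx : x ∈ F <;> simp [hx]

private lemma myExt_apply {γ : Type*} [DecidableEq γ] (F : Finset γ) (g : ↥F → ℝ) (x : γ) :
    myExt F g x = if h : x ∈ F then g ⟨x, h⟩ else 0 := rfl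

/-- Row sums and column sums, as a linear map. -/
private def rowColLM {ι κ : Type*} [Fintype ι] [Fintype κ]
    (R : Finset ι) (C : Finset κ) : ((ι × κ) → ℝ) →ₗ[ℝ] (↥R ⊕ ↥C → ℝ) where
  toFun h := Sum.elim (fun i => ∑ j, h (i.val, j)) (fun j => ∑ i, h (i, j.val))
  map_add' g h := by funext b; cases b <;> simp [Finset.sum_add_distrib]
  map_smul' c g := by funext b; cases b <;> simp [Finset.mul_sum]

private lemma rowColLM_inl {ι κ : Type*} [Fintype ι] [Fintype κ]
    (R : Finset ι) (C : Finset κ) (h : (ι × κ) → ℝ) (i : ↥R) :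
    rowColLM R C h (Sum.inl i) = ∑ j, h (i.val, j) := rfl

private lemma rowColLM_inr {ι κ : Type*} [Fintype ι] [Fintype κ]
    (R : Finset ι) (C : Finset κ) (h : (ι × κ) → ℝ) (j : ↥C) :
    rowColLM R C h (Sum.inr j) = ∑ i, h (i, j.val) := rfl

/-- The functional "sum of row coordinates minus sum of column coordinates". -/
private def sgnLM {ιR ιC : Type*} [Fintype ιR] [Fintype ιC] :
    (ιR ⊕ ιC → ℝ) →ₗ[ℝ] ℝ where
  toFun u := (∑ i : ιR, u (Sum.inl i)) - (∑ j : ιC, u (Sum.inr j))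
  map_add' g h := by simp [Finset.sum_add_distrib]; ring
  map_smul' c g := by
    simp only [smul_eq_mul, RingHom.id_apply, Pi.smul_apply]
    rw [mul_sub, Finset.mul_sum, Finset.mul_sum]

private lemma sgnLM_apply {ιR ιC : Type*} [Fintype ιR] [Fintype ιC] (u : ιR ⊕ ιC → ℝ) :
    sgnLM u = (∑ i : ιR, u (Sum.inl i)) - (∑ j : ιC, u (Sum.inr j)) := rfl

private lemma sgnLM_surjective {ιR ιC : Type*} [Fintype ιR] [Fintype ιC] [DecidableEq ιR]
    (i₀ : ιR) : Function.Surjective (sgnLM (ιR := ιR) (ιC := ιC)) := by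
  intro c
  refine ⟨c • Sum.elim (fun i => if i = i₀ then (1:ℝ) else 0) (fun _ => 0), ?_⟩
  simp [sgnLM_apply, Finset.mul_sum, mul_ite]

/-- An integer-valued real in `[0,1]` is `0` or `1`. -/
private lemma int01 (x : ℝ) (hx : ∃ k : ℤ, (k : ℝ) = x) (h0 : 0 ≤ x) (h1 : x ≤ 1) :
    x = 0 ∨ x = 1 := by
  obtain ⟨k, rfl⟩ := hx
  have hk0 : (0:ℤ) ≤ k := by exact_mod_cast h0
  have hk1 : k ≤ 1 := by exact_mod_cast h1
  have : k = 0 ∨ k = 1 := by omega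
  rcases this with h | h <;> simp [h]

end Aux

set_option maxHeartbeats 3200000 in
/-- Every extreme point of the feasible region of the flow reformulation of the
`bin_counts` constraint is a 0–1 matrix. -/
theorem bin_counts_polyhedron_extremePoints_zero_one
    (n m : ℕ) (hn : 0 < n) (hm : 0 < m) (lb ub : Fin m → ℤ)
    (P : Set (Fin n → Fin m → ℝ))
    (hP : P = {f | (∀ i j, 0 ≤ f i j) ∧ (∀ i, ∑ j, f i j = 1) ∧
      (∀ j, (lb j : ℝ) ≤ ∑ i, f i j ∧ ∑ i, f i j ≤ (ub j : ℝ))}) :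
    ∀ f ∈ Set.extremePoints ℝ P, ∀ i j, f i j = 0 ∨ f i j = 1 := by
  classical
  rintro f hf i0 j0
  obtain ⟨hfP, hextr⟩ := hf
  rw [hP] at hfP
  obtain ⟨hpos, hrow, hcol⟩ := hfP
  by_contra hcon
  push_neg at hcon
  obtain ⟨h00, h01⟩ := hcon
  -- each entry is at most 1
  have hle1 : ∀ i j, f i j ≤ 1 := by
    intro i j
    calc f i j ≤ ∑ j', f i j' :=
          Finset.single_le_sum (fun j' _ => hpos i j') (Finset.mem_univ j)
      _ = 1 := hrow i
  -- the set of fractional cells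
  set Frac : Finset (Fin n × Fin m) :=
    Finset.univ.filter (fun p => f p.1 p.2 ≠ 0 ∧ f p.1 p.2 ≠ 1) with hFracDef
  have hFrac_mem : ∀ p : Fin n × Fin m, p ∈ Frac ↔ f p.1 p.2 ≠ 0 ∧ f p.1 p.2 ≠ 1 := by
    intro p; simp [hFracDef]
  have hp0 : (i0, j0) ∈ Frac := (hFrac_mem _).mpr ⟨h00, h01⟩
  -- each row containing a fractional cell contains another one
  have hrow2 : ∀ i j, (i, j) ∈ Frac → ∃ j', j' ≠ j ∧ (i, j') ∈ Frac := by
    intro i j hij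
    by_contra hno
    push_neg at hno
    have h01' : ∀ j' ∈ Finset.univ.erase j, f i j' = 0 ∨ f i j' = 1 := by
      intro j' hj'
      have hne := Finset.ne_of_mem_erase hj'
      have := hno j' hne
      rw [hFrac_mem] at this
      tauto
    set k : ℤ := ∑ j' ∈ Finset.univ.erase j, (if f i j' = 0 then (0:ℤ) else 1) with hk
    have hkc : (k : ℝ) = ∑ j' ∈ Finset.univ.erase j, f i j' := by
      rw [hk]
      push_cast
      refine Finset.sum_congr rfl (fun j' hj' => ?_)
      rcases h01' j' hj' with h | h <;> simp [h]
    have hsum : f i j + (k : ℝ) = 1 := by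
      rw [hkc]
      rw [Finset.add_sum_erase _ _ (Finset.mem_univ j)]
      exact hrow i
    have : f i j = 0 ∨ f i j = 1 := by
      refine int01 _ ⟨1 - k, by push_cast; linarith⟩ (hpos i j) (hle1 i j)
    rw [hFrac_mem] at hij
    tauto
  -- integrality of a column sum
  set IntCol : Fin m → Prop := fun j => ∃ k : ℤ, (k : ℝ) = ∑ i, f i j with hIntColDef
  -- each integer-sum column containing a fractional cell contains another one
  have hcol2 : ∀ i j, (i, j) ∈ Frac → IntCol j → ∃ i', i' ≠ i ∧ (i', j) ∈ Frac := by
    intro i j hij hint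
    by_contra hno
    push_neg at hno
    have h01' : ∀ i' ∈ Finset.univ.erase i, f i' j = 0 ∨ f i' j = 1 := by
      intro i' hi'
      have hne := Finset.ne_of_mem_erase hi'
      have := hno i' hne
      rw [hFrac_mem] at this
      tauto
    obtain ⟨k0, hk0⟩ := hint
    set k : ℤ := ∑ i' ∈ Finset.univ.erase i, (if f i' j = 0 then (0:ℤ) else 1) with hk
    have hkc : (k : ℝ) = ∑ i' ∈ Finset.univ.erase i, f i' j := by
      rw [hk]
      push_cast
      refine Finset.sum_congr rfl (fun i' hi' => ?_)
      rcases h01' i' hi' with h | h <;> simp [h]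
    have hsum : f i j + (k : ℝ) = (k0 : ℝ) := by
      have h := Finset.add_sum_erase Finset.univ (fun i' => f i' j) (Finset.mem_univ i)
      rw [hkc, hk0]
      exact h
    have : f i j = 0 ∨ f i j = 1 := by
      refine int01 _ ⟨k0 - k, by push_cast; linarith⟩ (hpos i j) (hle1 i j)
    rw [hFrac_mem] at hij
    tauto
  -- the touched rows and touched integer columns
  set R : Finset (Fin n) := Frac.image Prod.fst with hRdef
  set C : Finset (Fin m) := (Frac.image Prod.snd).filter IntCol with hCdef
  have hR_mem : ∀ p ∈ Frac, p.1 ∈ R := fun p hp => Finset.mem_image_of_mem _ hp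
  have hC_mem : ∀ p ∈ Frac, IntCol p.2 → p.2 ∈ C := by
    intro p hp hint
    rw [hCdef, Finset.mem_filter]
    exact ⟨Finset.mem_image_of_mem _ hp, hint⟩
  -- counting: 2 * R.card ≤ Frac.card
  have hcardR : 2 * R.card ≤ Frac.card := by
    have hfib := Finset.card_eq_sum_card_fiberwise hR_mem
    have h2 : ∀ i ∈ R, 2 ≤ (Frac.filter fun p => p.1 = i).card := by
      intro i hi
      rw [hRdef, Finset.mem_image] at hi
      obtain ⟨p, hp, rfl⟩ := hi
      obtain ⟨j', hj'ne, hj'⟩ := hrow2 p.1 p.2 (by simpa using hp)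
      refine Finset.one_lt_card.mpr ⟨(p.1, p.2), ?_, (p.1, j'), ?_, ?_⟩
      · simp [Finset.mem_filter]; simpa using hp
      · simp [Finset.mem_filter]; exact hj'
      · simp [Prod.ext_iff]; intro h; exact hj'ne h.symm
    calc 2 * R.card = ∑ _i ∈ R, 2 := by rw [Finset.sum_const]; ring
      _ ≤ ∑ i ∈ R, (Frac.filter fun p => p.1 = i).card := Finset.sum_le_sum h2
      _ = Frac.card := hfib.symm
  -- counting for columns
  set FC : Finset (Fin n × Fin m) := Frac.filter (fun p => p.2 ∈ C) with hFCdef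
  have hcardC : 2 * C.card ≤ FC.card := by
    have hmem : ∀ p ∈ FC, p.2 ∈ C := by
      intro p hp; rw [hFCdef, Finset.mem_filter] at hp; exact hp.2
    have hfib := Finset.card_eq_sum_card_fiberwise hmem
    have h2 : ∀ j ∈ C, 2 ≤ (FC.filter fun p => p.2 = j).card := by
      intro j hj
      have hjC := hj
      rw [hCdef, Finset.mem_filter, Finset.mem_image] at hj
      obtain ⟨⟨p, hp, hpj⟩, hint⟩ := hj
      obtain ⟨i', hi'ne, hi'⟩ := hcol2 p.1 p.2 (by simpa using hp) (by rwa [hpj])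
      refine Finset.one_lt_card.mpr ⟨p, ?_, (i', j), ?_, ?_⟩
      · refine Finset.mem_filter.mpr ⟨?_, hpj⟩
        exact Finset.mem_filter.mpr ⟨hp, by rw [hpj]; exact hjC⟩
      · refine Finset.mem_filter.mpr ⟨?_, rfl⟩
        exact Finset.mem_filter.mpr ⟨hpj ▸ hi', hjC⟩
      · exact fun h => hi'ne (congrArg Prod.fst h).symm
    calc 2 * C.card = ∑ _j ∈ C, 2 := by rw [Finset.sum_const]; ring
      _ ≤ ∑ j ∈ C, (FC.filter fun p => p.2 = j).card := Finset.sum_le_sum h2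
      _ = FC.card := hfib.symm
  have hFCsub : FC.card ≤ Frac.card := Finset.card_le_card (Finset.filter_subset _ _)
  -- the constraint linear map
  set A : (↥Frac → ℝ) →ₗ[ℝ] (↥R ⊕ ↥C → ℝ) := (rowColLM R C).comp (myExt Frac) with hAdef
  have hcardSum : Fintype.card (↥R ⊕ ↥C) = R.card + C.card := by
    simp [Fintype.card_sum]
  have hcardFrac : Fintype.card ↥Frac = Frac.card := Fintype.card_coe _
  -- existence of a nonzero kernel element
  have hker : ∃ g, A g = 0 ∧ g ≠ 0 := by
    by_cases hall : ∀ p ∈ Frac, IntCol p.2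
    · -- all touched columns are integer columns: use the dependency
      have hFCeq : FC = Frac := by
        rw [hFCdef]
        refine Finset.filter_true_of_mem (fun p hp => hC_mem p hp (hall p hp))
      have hcard : Fintype.card (↥R ⊕ ↥C) ≤ Fintype.card ↥Frac := by
        rw [hcardSum, hcardFrac]
        rw [hFCeq] at hcardC
        omega
      refine aux_ker2 A sgnLM (sgnLM_surjective ⟨i0, hR_mem _ hp0⟩) ?_ hcard
      intro g
      rw [sgnLM_apply]
      have hrw : ∀ b, A g b = rowColLM R C (myExt Frac g) b := fun b => rfl
      have h1 : ∑ i : ↥R, A g (Sum.inl i) = ∑ i : Fin n, ∑ j, myExt Frac g (i, j) := by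
        simp only [hrw, rowColLM_inl]
        rw [Finset.sum_coe_sort R (fun i => ∑ j, myExt Frac g (i, j))]
        refine Finset.sum_subset (Finset.subset_univ R) ?_
        intro i _ hiR
        refine Finset.sum_eq_zero (fun j _ => ?_)
        rw [myExt_apply]
        refine dif_neg (fun hmem => hiR (hR_mem _ hmem))
      have h2 : ∑ j : ↥C, A g (Sum.inr j) = ∑ j : Fin m, ∑ i, myExt Frac g (i, j) := by
        simp only [hrw, rowColLM_inr]
        rw [Finset.sum_coe_sort C (fun j => ∑ i, myExt Frac g (i, j))]
        refine Finset.sum_subset (Finset.subset_univ C) ?_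
        intro j _ hjC
        refine Finset.sum_eq_zero (fun i _ => ?_)
        rw [myExt_apply]
        refine dif_neg (fun hmem => hjC (hC_mem _ hmem (hall _ hmem)))
      rw [h1, h2, Finset.sum_comm, sub_self]
    · -- some fractional cell in a non-integer column: strict dimension count
      push_neg at hall
      obtain ⟨p0, hp0F, hp0int⟩ := hall
      have hp0FC : p0 ∉ FC := by
        rw [hFCdef, Finset.mem_filter]
        rintro ⟨-, hC⟩
        rw [hCdef, Finset.mem_filter] at hC
        exact hp0int hC.2
      have hFClt : FC.card < Frac.card :=
        Finset.card_lt_card (Finset.ssubset_iff_of_subset (Finset.filter_subset _ _) |>.mpr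
          ⟨p0, hp0F, hp0FC⟩)
      refine aux_ker1 A ?_
      rw [hcardSum, hcardFrac]
      omega
  obtain ⟨g, hAg, hgne⟩ := hker
  -- the perturbation matrix
  obtain ⟨G, hGdef⟩ : ∃ G : Fin n → Fin m → ℝ, G = fun i j => myExt Frac g (i, j) := ⟨_, rfl⟩
  have hGsupp : ∀ i j, (i, j) ∉ Frac → G i j = 0 := by
    intro i j h; rw [hGdef]; simp only [myExt_apply]; exact dif_neg h
  have hGrow : ∀ i, ∑ j, G i j = 0 := by
    intro i
    by_cases hi : i ∈ R
    · have := congrFun hAg (Sum.inl ⟨i, hi⟩)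
      simpa [hAdef, rowColLM_inl, hGdef] using this
    · exact Finset.sum_eq_zero (fun j _ => hGsupp i j (fun hm => hi (hR_mem _ hm)))
  have hGcol : ∀ j, IntCol j → ∑ i, G i j = 0 := by
    intro j hint
    by_cases hj : j ∈ C
    · have := congrFun hAg (Sum.inr ⟨j, hj⟩)
      simpa [hAdef, rowColLM_inr, hGdef] using this
    · exact Finset.sum_eq_zero (fun i _ => hGsupp i j (fun hm => hj (hC_mem (i, j) hm hint)))
  -- strict slack in non-integer columns
  have hfree : ∀ j, ¬ IntCol j → (lb j : ℝ) < ∑ i, f i j ∧ ∑ i, f i j < (ub j : ℝ) := by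
    intro j hj
    constructor
    · refine lt_of_le_of_ne (hcol j).1 (fun h => hj ⟨lb j, h⟩)
    · refine lt_of_le_of_ne (hcol j).2 (fun h => hj ⟨ub j, h.symm⟩)
  -- bound on the entries of G
  obtain ⟨K, hKdef⟩ : ∃ K : ℝ, K = (∑ i, ∑ j, |G i j|) + 1 := ⟨_, rfl⟩
  have habs_nonneg : (0:ℝ) ≤ ∑ i, ∑ j, |G i j| :=
    Finset.sum_nonneg (fun i _ => Finset.sum_nonneg (fun j _ => abs_nonneg _))
  have hKpos : 0 < K := by rw [hKdef]; linarith
  have hGK : ∀ i j, |G i j| ≤ K := by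
    intro i j
    have h1 : |G i j| ≤ ∑ j', |G i j'| :=
      Finset.single_le_sum (f := fun j' => |G i j'|) (fun j' _ => abs_nonneg _)
        (Finset.mem_univ j)
    have h2 : ∑ j', |G i j'| ≤ ∑ i', ∑ j', |G i' j'| :=
      Finset.single_le_sum (f := fun i' => ∑ j', |G i' j'|)
        (fun i' _ => Finset.sum_nonneg (fun j' _ => abs_nonneg _)) (Finset.mem_univ i)
    rw [hKdef]; linarith
  have hGcolK : ∀ j, |∑ i, G i j| ≤ K := by
    intro j
    have h1 : |∑ i, G i j| ≤ ∑ i, |G i j| := Finset.abs_sum_le_sum_abs _ _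
    have h2 : ∀ i, |G i j| ≤ ∑ j', |G i j'| := fun i =>
      Finset.single_le_sum (f := fun j' => |G i j'|) (fun j' _ => abs_nonneg _)
        (Finset.mem_univ j)
    have h3 : ∑ i, |G i j| ≤ ∑ i, ∑ j', |G i j'| :=
      Finset.sum_le_sum (fun i _ => h2 i)
    rw [hKdef]; linarith
  -- the minimal slack
  obtain ⟨slack, hslackdef⟩ : ∃ slack : Fin m → ℝ, slack = fun j =>
      if IntCol j then 1 else min ((∑ i, f i j) - lb j) ((ub j : ℝ) - ∑ i, f i j) := ⟨_, rfl⟩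
  have hslackpos : ∀ j, 0 < slack j := by
    intro j
    rw [hslackdef]
    by_cases hj : IntCol j
    · simp [hj]
    · obtain ⟨h1, h2⟩ := hfree j hj
      simp only [hj, if_false, lt_min_iff]
      constructor <;> linarith
  -- δ1 : minimal fractional entry
  have hFracNe : Frac.Nonempty := ⟨_, hp0⟩
  obtain ⟨δ1, hδ1def⟩ : ∃ d : ℝ, d = (Frac.image fun p => f p.1 p.2).min' (hFracNe.image _) :=
    ⟨_, rfl⟩
  have hδ1pos : 0 < δ1 := by
    have hmem := (Frac.image fun p => f p.1 p.2).min'_mem (hFracNe.image _)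
    rw [Finset.mem_image] at hmem
    obtain ⟨p, hp, hpe⟩ := hmem
    rw [hδ1def, ← hpe]
    have := (hFrac_mem p).mp hp
    exact lt_of_le_of_ne (hpos p.1 p.2) (Ne.symm this.1)
  have hδ1le : ∀ p ∈ Frac, δ1 ≤ f p.1 p.2 := fun p hp => by
    rw [hδ1def]; exact Finset.min'_le _ _ (Finset.mem_image_of_mem _ hp)
  -- δ2 : minimal slack
  have : Nonempty (Fin m) := ⟨⟨0, hm⟩⟩
  obtain ⟨δ2, hδ2def⟩ : ∃ d : ℝ,
      d = (Finset.univ.image slack).min' ((Finset.univ_nonempty).image _) := ⟨_, rfl⟩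
  have hδ2pos : 0 < δ2 := by
    have hmem := (Finset.univ.image slack).min'_mem ((Finset.univ_nonempty).image _)
    rw [Finset.mem_image] at hmem
    obtain ⟨j, _, hje⟩ := hmem
    rw [hδ2def, ← hje]
    exact hslackpos j
  have hδ2le : ∀ j, δ2 ≤ slack j := fun j => by
    rw [hδ2def]; exact Finset.min'_le _ _ (Finset.mem_image_of_mem _ (Finset.mem_univ j))
  obtain ⟨δ, hδdef⟩ : ∃ d : ℝ, d = min δ1 δ2 := ⟨_, rfl⟩
  have hδpos : 0 < δ := by rw [hδdef]; exact lt_min hδ1pos hδ2pos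
  obtain ⟨ε, hεdef⟩ : ∃ e : ℝ, e = δ / K := ⟨_, rfl⟩
  have hεpos : 0 < ε := by rw [hεdef]; exact div_pos hδpos hKpos
  have hεK : ∀ x : ℝ, |x| ≤ K → ε * |x| ≤ δ := by
    intro x hx
    calc ε * |x| ≤ ε * K := by
          exact mul_le_mul_of_nonneg_left hx (le_of_lt hεpos)
      _ = δ := by rw [hεdef]; exact div_mul_cancel₀ δ (ne_of_gt hKpos)
  -- the two perturbed points
  obtain ⟨x1, hx1def⟩ : ∃ x : Fin n → Fin m → ℝ, x = fun i j => f i j - ε * G i j := ⟨_, rfl⟩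
  obtain ⟨x2, hx2def⟩ : ∃ x : Fin n → Fin m → ℝ, x = fun i j => f i j + ε * G i j := ⟨_, rfl⟩
  have hx1e : ∀ i j, x1 i j = f i j - ε * G i j := fun i j => by rw [hx1def]
  have hx2e : ∀ i j, x2 i j = f i j + ε * G i j := fun i j => by rw [hx2def]
  have hentry : ∀ i j, 0 ≤ x1 i j ∧ 0 ≤ x2 i j := by
    intro i j
    by_cases hij : (i, j) ∈ Frac
    · have h1 : ε * |G i j| ≤ δ := hεK _ (hGK i j)
      have h2 : δ ≤ f i j := by
        rw [hδdef]; exact le_trans (min_le_left _ _) (hδ1le (i, j) hij)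
      have h3 : ε * G i j ≤ ε * |G i j| :=
        mul_le_mul_of_nonneg_left (le_abs_self _) (le_of_lt hεpos)
      have h4 : -(ε * |G i j|) ≤ ε * G i j := by
        rw [← mul_neg]
        exact mul_le_mul_of_nonneg_left (neg_abs_le _) (le_of_lt hεpos)
      constructor
      · rw [hx1e]; linarith
      · rw [hx2e]; linarith
    · have h0 := hGsupp i j hij
      constructor
      · rw [hx1e, h0]; simpa using hpos i j
      · rw [hx2e, h0]; simpa using hpos i j
  have hrowsum : ∀ i, (∑ j, x1 i j = 1) ∧ (∑ j, x2 i j = 1) := by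
    intro i
    have h1 : ∑ j, ε * G i j = ε * ∑ j, G i j := by rw [Finset.mul_sum]
    constructor
    · simp only [hx1e]
      rw [Finset.sum_sub_distrib, hrow i, h1, hGrow i, mul_zero, sub_zero]
    · simp only [hx2e]
      rw [Finset.sum_add_distrib, hrow i, h1, hGrow i, mul_zero, add_zero]
  have hcolsum : ∀ j, ((lb j : ℝ) ≤ ∑ i, x1 i j ∧ ∑ i, x1 i j ≤ (ub j : ℝ)) ∧
      ((lb j : ℝ) ≤ ∑ i, x2 i j ∧ ∑ i, x2 i j ≤ (ub j : ℝ)) := by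
    intro j
    have hs1 : ∑ i, x1 i j = (∑ i, f i j) - ε * ∑ i, G i j := by
      simp only [hx1e]
      rw [Finset.sum_sub_distrib, Finset.mul_sum]
    have hs2 : ∑ i, x2 i j = (∑ i, f i j) + ε * ∑ i, G i j := by
      simp only [hx2e]
      rw [Finset.sum_add_distrib, Finset.mul_sum]
    by_cases hj : IntCol j
    · rw [hs1, hs2, hGcol j hj, mul_zero, sub_zero, add_zero]
      exact ⟨hcol j, hcol j⟩
    · have hsl : δ2 ≤ slack j := hδ2le j
      have hsleq : slack j = min ((∑ i, f i j) - lb j) ((ub j : ℝ) - ∑ i, f i j) := by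
        rw [hslackdef]; simp [hj]
      have h1 : ε * |∑ i, G i j| ≤ δ := hεK _ (hGcolK j)
      have h2 : δ ≤ slack j := by rw [hδdef]; exact le_trans (min_le_right _ _) hsl
      have h3 : slack j ≤ (∑ i, f i j) - lb j := by rw [hsleq]; exact min_le_left _ _
      have h4 : slack j ≤ (ub j : ℝ) - ∑ i, f i j := by rw [hsleq]; exact min_le_right _ _
      have h5 : ε * (∑ i, G i j) ≤ ε * |∑ i, G i j| :=
        mul_le_mul_of_nonneg_left (le_abs_self _) (le_of_lt hεpos)
      have h6 : -(ε * |∑ i, G i j|) ≤ ε * (∑ i, G i j) := by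
        rw [← mul_neg]
        exact mul_le_mul_of_nonneg_left (neg_abs_le _) (le_of_lt hεpos)
      rw [hs1, hs2]
      refine ⟨⟨by linarith, by linarith⟩, by linarith, by linarith⟩
  have hx1P : x1 ∈ P := by
    rw [hP]
    exact ⟨fun i j => (hentry i j).1, fun i => (hrowsum i).1, fun j => (hcolsum j).1⟩
  have hx2P : x2 ∈ P := by
    rw [hP]
    exact ⟨fun i j => (hentry i j).2, fun i => (hrowsum i).2, fun j => (hcolsum j).2⟩
  have hseg : f ∈ openSegment ℝ x1 x2 := by
    refine ⟨1/2, 1/2, by norm_num, by norm_num, by norm_num, ?_⟩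
    funext i j
    simp only [Pi.add_apply, Pi.smul_apply, smul_eq_mul, hx1e, hx2e]
    ring
  have hx2f : x2 = f := hextr hx2P hx1P (by rw [openSegment_symm]; exact hseg)
  -- derive a contradiction : G must be zero
  obtain ⟨p, hgp⟩ := Function.ne_iff.mp hgne
  have hGp : G p.val.1 p.val.2 = g p := by
    rw [hGdef]
    simp only [myExt_apply]
    rw [dif_pos (by simpa using p.property)]
  have hcf := congrFun (congrFun hx2f p.val.1) p.val.2
  rw [hx2e] at hcf
  have h0 : ε * G p.val.1 p.val.2 = 0 := by linarith
  rcases mul_eq_zero.mp h0 with h | h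
  · exact absurd h (ne_of_gt hεpos)
  · rw [hGp] at h
    exact hgp (by simpa using h)
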